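/- arXiv:1711.04707 — 2 statements merged into one kernel-verified Lean document; each statement's English description precedes it below -/
import Mathlib

section
/- Let 0 < c < 1. There exist constants c₁, c₂ > 0 depending only on c such that for all even integers ℓ ≥ 2 and all even integers m with 0 ≤ m < cℓ, c₁ ≤ √( (2ℓ+1) · (ℓ−m)! / (ℓ+m)! ) · ( (ℓ−1)‼ / ℓ‼ ) · ( (ℓ+m)‼ / (ℓ−m)‼ ) ≤ c₂. -/
set_option maxHeartbeats 1000000

open Nat Real

lemma dfacL : ∀ k : ℕ, (2*k+3) * ((2*k+1)‼)^2 ≤ ((2*k+2)‼)^2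
  | 0 => by decide
  | (k+1) => by
    have ih := dfacL k
    have h1 : (2*(k+1)+2)‼ = (2*k+4) * (2*k+2)‼ := by
      have : 2*(k+1)+2 = (2*k+2)+2 := by ring
      rw [this, Nat.doubleFactorial_add_two]
    have h2 : (2*(k+1)+1)‼ = (2*k+3) * (2*k+1)‼ := by
      have : 2*(k+1)+1 = (2*k+1)+2 := by ring
      rw [this, Nat.doubleFactorial_add_two]
    rw [h1, h2]
    calc (2*(k+1)+3) * ((2*k+3) * (2*k+1)‼)^2
        = ((2*k+5)*(2*k+3)) * ((2*k+3) * ((2*k+1)‼)^2) := by ring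
      _ ≤ ((2*k+4)*(2*k+4)) * ((2*k+2)‼)^2 := by
          exact Nat.mul_le_mul (by nlinarith) ih
      _ = ((2*k+4) * (2*k+2)‼)^2 := by ring

lemma dfacU : ∀ k : ℕ, ((2*k+2)‼)^2 ≤ (4*k+4) * ((2*k+1)‼)^2
  | 0 => by decide
  | (k+1) => by
    have ih := dfacU k
    have h1 : (2*(k+1)+2)‼ = (2*k+4) * (2*k+2)‼ := by
      have : 2*(k+1)+2 = (2*k+2)+2 := by ring
      rw [this, Nat.doubleFactorial_add_two]
    have h2 : (2*(k+1)+1)‼ = (2*k+3) * (2*k+1)‼ := by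
      have : 2*(k+1)+1 = (2*k+1)+2 := by ring
      rw [this, Nat.doubleFactorial_add_two]
    rw [h1, h2]
    calc ((2*k+4) * (2*k+2)‼)^2
        = ((2*k+4)*(2*k+4)) * ((2*k+2)‼)^2 := by ring
      _ ≤ ((2*k+4)*(2*k+4)) * ((4*k+4) * ((2*k+1)‼)^2) := Nat.mul_le_mul_left _ ih
      _ ≤ (4*(k+1)+4) * ((2*k+3) * (2*k+1)‼)^2 := by
          have key : (2*k+4)*(2*k+4)*(4*k+4) ≤ (4*(k+1)+4) * (2*k+3)^2 := by nlinarith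
          calc ((2*k+4)*(2*k+4)) * ((4*k+4) * ((2*k+1)‼)^2)
              = ((2*k+4)*(2*k+4)*(4*k+4)) * ((2*k+1)‼)^2 := by ring
            _ ≤ ((4*(k+1)+4) * (2*k+3)^2) * ((2*k+1)‼)^2 := Nat.mul_le_mul_right _ key
            _ = (4*(k+1)+4) * ((2*k+3) * (2*k+1)‼)^2 := by ring

/-- For `0 < c < 1` there are constants `c₁, c₂ > 0` depending only on `c` such that for all
even `ℓ ≥ 2` and even `m` with `0 ≤ m < cℓ`,
`c₁ ≤ √((2ℓ+1)·(ℓ-m)!/(ℓ+m)!) · ((ℓ-1)‼/ℓ‼) · ((ℓ+m)‼/(ℓ-m)‼) ≤ c₂`. -/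
theorem stmt_6 (c : ℝ) (hc0 : 0 < c) (hc1 : c < 1) :
    ∃ c₁ c₂ : ℝ, 0 < c₁ ∧ 0 < c₂ ∧
      ∀ ℓ m : ℕ, Even ℓ → 2 ≤ ℓ → Even m → (m : ℝ) < c * ℓ →
        c₁ ≤ Real.sqrt (((2 * ℓ + 1 : ℕ) : ℝ) * ((ℓ - m)! : ℝ) / ((ℓ + m)! : ℝ)) *
              (((ℓ - 1)‼ : ℝ) / (ℓ‼ : ℝ)) * (((ℓ + m)‼ : ℝ) / ((ℓ - m)‼ : ℝ)) ∧
        Real.sqrt (((2 * ℓ + 1 : ℕ) : ℝ) * ((ℓ - m)! : ℝ) / ((ℓ + m)! : ℝ)) *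
              (((ℓ - 1)‼ : ℝ) / (ℓ‼ : ℝ)) * (((ℓ + m)‼ : ℝ) / ((ℓ - m)‼ : ℝ)) ≤ c₂ := by
  have hc' : (0:ℝ) < 1 - c := by linarith
  refine ⟨Real.sqrt (1/2), Real.sqrt (Real.sqrt (36/(1-c))), by positivity, by positivity, ?_⟩
  intro ℓ m hℓe hℓ2 hme hm
  -- m < ℓ
  have hℓpos : (0:ℝ) < (ℓ:ℝ) := by exact_mod_cast Nat.lt_of_lt_of_le Nat.zero_lt_two hℓ2
  have hmℓ : m < ℓ := by
    have : (m:ℝ) < (ℓ:ℝ) := lt_trans hm (by nlinarith)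
    exact_mod_cast this
  obtain ⟨b, q, rfl, rfl⟩ : ∃ b q, m = 2*b ∧ ℓ = 2*(b+q+1) := by
    obtain ⟨x, hx⟩ := hℓe; obtain ⟨y, hy⟩ := hme
    exact ⟨y, x - y - 1, by omega, by omega⟩
  have r1 : 2*(b+q+1) - 2*b = 2*q+2 := by omega
  have r2 : 2*(b+q+1) + 2*b = 2*(2*b+q)+2 := by omega
  have r3 : 2*(b+q+1) - 1 = 2*(b+q)+1 := by omega
  have r4 : 2*(2*(b+q+1))+1 = 4*(b+q)+5 := by omega
  have r5 : 2*(b+q+1) = 2*(b+q)+2 := by omega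
  rw [r1, r2, r3, r4, r5]
  have f1 : (2*q+2)! = (2*q+2)‼ * (2*q+1)‼ := by
    have h := Nat.factorial_eq_mul_doubleFactorial (2*q+1)
    norm_num at h ⊢; convert h using 2 <;> omega
  have f2 : (2*(2*b+q)+2)! = (2*(2*b+q)+2)‼ * (2*(2*b+q)+1)‼ := by
    have h := Nat.factorial_eq_mul_doubleFactorial (2*(2*b+q)+1)
    norm_num at h ⊢; convert h using 2 <;> omega
  rw [f1, f2]
  -- positivity of double factorials (as reals)
  have hu0 : (0:ℝ) < ((2*(2*b+q)+2)‼ : ℝ) := by positivity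
  have hu'0 : (0:ℝ) < ((2*(2*b+q)+1)‼ : ℝ) := by positivity
  have hv0 : (0:ℝ) < ((2*(b+q)+2)‼ : ℝ) := by positivity
  have hv'0 : (0:ℝ) < ((2*(b+q)+1)‼ : ℝ) := by positivity
  have hw0 : (0:ℝ) < ((2*q+2)‼ : ℝ) := by positivity
  have hw'0 : (0:ℝ) < ((2*q+1)‼ : ℝ) := by positivity
  -- Wallis-type bounds, cast to ℝ
  have hUu : ((2*(2*b+q)+2)‼ : ℝ)^2 ≤ (4*(2*b+q)+4) * ((2*(2*b+q)+1)‼ : ℝ)^2 := by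
    exact_mod_cast dfacU (2*b+q)
  have hLu : (2*(2*b+q)+3 : ℝ) * ((2*(2*b+q)+1)‼ : ℝ)^2 ≤ ((2*(2*b+q)+2)‼ : ℝ)^2 := by
    exact_mod_cast dfacL (2*b+q)
  have hUv : ((2*(b+q)+2)‼ : ℝ)^2 ≤ (4*(b+q)+4) * ((2*(b+q)+1)‼ : ℝ)^2 := by
    exact_mod_cast dfacU (b+q)
  have hLv : (2*(b+q)+3 : ℝ) * ((2*(b+q)+1)‼ : ℝ)^2 ≤ ((2*(b+q)+2)‼ : ℝ)^2 := by
    exact_mod_cast dfacL (b+q)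
  have hUw : ((2*q+2)‼ : ℝ)^2 ≤ (4*q+4) * ((2*q+1)‼ : ℝ)^2 := by
    exact_mod_cast dfacU q
  have hLw : (2*q+3 : ℝ) * ((2*q+1)‼ : ℝ)^2 ≤ ((2*q+2)‼ : ℝ)^2 := by
    exact_mod_cast dfacL q
  push_cast at hm ⊢
  set B : ℝ := (b:ℝ) with hB
  set Q : ℝ := (q:ℝ) with hQ
  have hB0 : 0 ≤ B := Nat.cast_nonneg b
  have hQ0 : 0 ≤ Q := Nat.cast_nonneg q
  set u : ℝ := ((2*(2*b+q)+2)‼ : ℝ) with hu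
  set u' : ℝ := ((2*(2*b+q)+1)‼ : ℝ) with hu'
  set v : ℝ := ((2*(b+q)+2)‼ : ℝ) with hv
  set v' : ℝ := ((2*(b+q)+1)‼ : ℝ) with hv'
  set w : ℝ := ((2*q+2)‼ : ℝ) with hw
  set w' : ℝ := ((2*q+1)‼ : ℝ) with hw'
  -- rewrite the expression as a single square root
  have hkey : √((4*(B+Q)+5) * (w*w') / (u*u')) * (v'/v) * (u/w)
      = √((4*(B+Q)+5) * u * w' * v'^2 / (u' * w * v^2)) := by
    rw [show (4*(B+Q)+5) * u * w' * v'^2 / (u' * w * v^2)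
        = ((4*(B+Q)+5) * (w*w') / (u*u')) * ((v'/v)*(u/w))^2 by
      field_simp]
    rw [Real.sqrt_mul (by positivity), Real.sqrt_sq (by positivity)]
    ring
  rw [hkey]
  set X : ℝ := (4*(B+Q)+5) * u * w' * v'^2 / (u' * w * v^2) with hXdef
  have hX0 : 0 ≤ X := by positivity
  have hXsq : X^2 = ((4*(B+Q)+5) * u * w' * v'^2)^2 / (u' * w * v^2)^2 := by
    rw [hXdef, div_pow]
  -- scalar inequalities
  have mBB : 0 ≤ B*B := mul_nonneg hB0 hB0
  have mBQ : 0 ≤ B*Q := mul_nonneg hB0 hQ0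
  have mQQ : 0 ≤ Q*Q := mul_nonneg hQ0 hQ0
  have mBBB : 0 ≤ B*B*B := mul_nonneg mBB hB0
  have mBBQ : 0 ≤ B*B*Q := mul_nonneg mBB hQ0
  have mBQQ : 0 ≤ B*Q*Q := mul_nonneg mBQ hQ0
  have mQQQ : 0 ≤ Q*Q*Q := mul_nonneg mQQ hQ0
  have h1 : (1-c)*(2*(B+Q)+2) ≤ 2*Q+3 := by linarith only [hm]
  have h2 : (4*(B+Q)+5)^2 ≤ 9*(2*(B+Q)+3)^2 := by
    linarith only [hB0, hQ0, mBB, mBQ, mQQ]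
  have h3 : (4*(2*B+Q)+4 : ℝ) ≤ 4*(2*(B+Q)+2) := by linarith
  have s2 : (1-c)*(4*(B+Q)+5)^2*(4*(2*B+Q)+4) ≤ 36*(2*Q+3)*(2*(B+Q)+3)^2 := by
    calc (1-c)*(4*(B+Q)+5)^2*(4*(2*B+Q)+4)
        ≤ ((1-c)*(9*(2*(B+Q)+3)^2))*(4*(2*(B+Q)+2)) := by
          apply mul_le_mul (mul_le_mul_of_nonneg_left h2 (le_of_lt hc')) h3
            (by positivity) (by positivity)
      _ = (36*(2*(B+Q)+3)^2) * ((1-c)*(2*(B+Q)+2)) := by ring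
      _ ≤ (36*(2*(B+Q)+3)^2) * (2*Q+3) := by
          apply mul_le_mul_of_nonneg_left h1 (by positivity)
      _ = 36*(2*Q+3)*(2*(B+Q)+3)^2 := by ring
  have s2' : (1/4)*(4*Q+4)*(4*(B+Q)+4)^2 ≤ (4*(B+Q)+5)^2*(2*(2*B+Q)+3) := by
    linarith only [hB0, hQ0, mBB, mBQ, mQQ, mBBB, mBBQ, mBQQ, mQQQ]
  -- squared bounds for v
  have hLv2 : ((2*(B+Q)+3)*v'^2) * ((2*(B+Q)+3)*v'^2) ≤ v^2*v^2 :=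
    mul_le_mul hLv hLv (by positivity) (by positivity)
  have hUv2 : v^2*v^2 ≤ ((4*(B+Q)+4)*v'^2) * ((4*(B+Q)+4)*v'^2) :=
    mul_le_mul hUv hUv (by positivity) (by positivity)
  -- upper bound on X^2
  have hXU : X^2 ≤ 36/(1-c) := by
    rw [hXsq, div_le_div_iff₀ (by positivity) hc']
    calc ((4*(B+Q)+5) * u * w' * v'^2)^2 * (1-c)
        = ((1-c)*(4*(B+Q)+5)^2*(w'^2*v'^4)) * u^2 := by ring
      _ ≤ ((1-c)*(4*(B+Q)+5)^2*(w'^2*v'^4)) * ((4*(2*B+Q)+4)*u'^2) := by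
          apply mul_le_mul_of_nonneg_left hUu (by positivity)
      _ = ((1-c)*(4*(B+Q)+5)^2*(4*(2*B+Q)+4)) * (u'^2*w'^2*v'^4) := by ring
      _ ≤ (36*(2*Q+3)*(2*(B+Q)+3)^2) * (u'^2*w'^2*v'^4) := by
          apply mul_le_mul_of_nonneg_right s2 (by positivity)
      _ = (36*u'^2) * (((2*Q+3)*w'^2) * (((2*(B+Q)+3)*v'^2)*((2*(B+Q)+3)*v'^2))) := by ring
      _ ≤ (36*u'^2) * (w^2 * (v^2*v^2)) := by
          apply mul_le_mul_of_nonneg_left _ (by positivity)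
          exact mul_le_mul hLw hLv2 (by positivity) (by positivity)
      _ = 36 * (u' * w * v^2)^2 := by ring
  -- lower bound on X^2
  have hXL : (1:ℝ)/4 ≤ X^2 := by
    rw [hXsq, le_div_iff₀ (by positivity)]
    calc (1:ℝ)/4 * (u' * w * v^2)^2
        = ((1:ℝ)/4*u'^2) * (w^2 * (v^2*v^2)) := by ring
      _ ≤ ((1:ℝ)/4*u'^2) * (((4*Q+4)*w'^2) * (((4*(B+Q)+4)*v'^2)*((4*(B+Q)+4)*v'^2))) := by
          apply mul_le_mul_of_nonneg_left _ (by positivity)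
          exact mul_le_mul hUw hUv2 (by positivity) (by positivity)
      _ = ((1/4)*(4*Q+4)*(4*(B+Q)+4)^2) * (u'^2*w'^2*v'^4) := by ring
      _ ≤ ((4*(B+Q)+5)^2*(2*(2*B+Q)+3)) * (u'^2*w'^2*v'^4) := by
          apply mul_le_mul_of_nonneg_right s2' (by positivity)
      _ = ((4*(B+Q)+5)^2*(w'^2*v'^4)) * ((2*(2*B+Q)+3)*u'^2) := by ring
      _ ≤ ((4*(B+Q)+5)^2*(w'^2*v'^4)) * u^2 := by
          apply mul_le_mul_of_nonneg_left hLu (by positivity)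
      _ = ((4*(B+Q)+5) * u * w' * v'^2)^2 := by ring
  constructor
  · apply Real.sqrt_le_sqrt
    nlinarith only [hXL, hX0]
  · apply Real.sqrt_le_sqrt
    rw [← Real.sqrt_sq hX0]
    exact Real.sqrt_le_sqrt hXU
end

section
/- Let σ be the surface measure on the unit sphere S² ⊂ ℝ³, let N_k = ( ∫_{S²} (x₁² + x₂²)^k dσ )^{-1/2}, let Q_k(x) = N_k (x₁ + i x₂)^k, and let γ(s) = (cos s, sin s, 0) for s ∈ [0, 2π] be the equator parametrized by arc length. Then for every 1 ≤ p < ∞ and all integers k, m ≥ 1, ( ∫_0^{2π} |Q_k(γ(s)) Q_m(γ(s))|^p ds )^{1/p} = (2π)^{1/p} N_k N_m, and consequently there is a constant c > 0 such that ( ∫_0^{2π} |Q_k(γ(s)) Q_m(γ(s))|^p ds )^{1/p} ≥ c· k^{1/4} m^{1/4} for all k, m ≥ 1 and 1 ≤ p < ∞. -/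
open MeasureTheory Real Complex


noncomputable def sphericalNormConst (k : ℕ) : ℝ :=
  (∫ x in Metric.sphere (0 : EuclideanSpace ℝ (Fin 3)) 1,
      ((x 0) ^ 2 + (x 1) ^ 2) ^ k ∂μH[2]) ^ (-(1 / 2 : ℝ))

noncomputable def highestWeightSH (k : ℕ) (x : EuclideanSpace ℝ (Fin 3)) : ℂ :=
  (sphericalNormConst k : ℂ) * ((x 0 : ℂ) + Complex.I * (x 1 : ℂ)) ^ k

noncomputable def equator (s : ℝ) : EuclideanSpace ℝ (Fin 3) :=
  WithLp.toLp 2 ![Real.cos s, Real.sin s, 0]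

noncomputable def sphInt (k : ℕ) : ℝ :=
  ∫ x in Metric.sphere (0 : EuclideanSpace ℝ (Fin 3)) 1,
      ((x 0) ^ 2 + (x 1) ^ 2) ^ k ∂μH[2]

lemma sphInt_nonneg (k : ℕ) : 0 ≤ sphInt k := by
  apply setIntegral_nonneg (Metric.isClosed_sphere.measurableSet)
  intro x _
  positivity

lemma normConst_nonneg (k : ℕ) : 0 ≤ sphericalNormConst k :=
  Real.rpow_nonneg (sphInt_nonneg k) _

lemma norm_hw (k : ℕ) (s : ℝ) :
    ‖highestWeightSH k (equator s)‖ = sphericalNormConst k := by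
  have h1 : ((equator s 0 : ℝ) : ℂ) + Complex.I * ((equator s 1 : ℝ) : ℂ)
      = Complex.exp (s * Complex.I) := by
    simp [equator, Complex.exp_mul_I, Matrix.cons_val_zero, Matrix.cons_val_one]
    ring
  rw [highestWeightSH, norm_mul, norm_pow, h1]
  simp [Complex.norm_exp, _root_.abs_of_nonneg (normConst_nonneg k)]


lemma myabs_sin_sub_sin_le (x y : ℝ) : |Real.sin x - Real.sin y| ≤ |x - y| := by
  rw [Real.sin_sub_sin]
  calc |2 * Real.sin ((x - y) / 2) * Real.cos ((x + y) / 2)|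
      = 2 * |Real.sin ((x - y) / 2)| * |Real.cos ((x + y) / 2)| := by
        rw [abs_mul, abs_mul]; norm_num
    _ ≤ 2 * |(x - y) / 2| * 1 :=
        mul_le_mul (mul_le_mul_of_nonneg_left Real.abs_sin_le_abs (by norm_num))
          (Real.abs_cos_le_one _) (abs_nonneg _) (by positivity)
    _ = |x - y| := by rw [abs_div, _root_.abs_two]; ring

lemma myabs_cos_sub_cos_le (x y : ℝ) : |Real.cos x - Real.cos y| ≤ |x - y| := by
  rw [Real.cos_sub_cos]
  calc |-2 * Real.sin ((x + y) / 2) * Real.sin ((x - y) / 2)|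
      = 2 * |Real.sin ((x + y) / 2)| * |Real.sin ((x - y) / 2)| := by
        rw [abs_mul, abs_mul]; norm_num
    _ ≤ 2 * 1 * |(x - y) / 2| :=
        mul_le_mul (mul_le_mul_of_nonneg_left (Real.abs_sin_le_one _) (by norm_num))
          Real.abs_sin_le_abs (abs_nonneg _) (by norm_num)
    _ = |x - y| := by rw [abs_div, _root_.abs_two]; ring

noncomputable def sphParam (a : Fin 2 → ℝ) : EuclideanSpace ℝ (Fin 3) :=
  WithLp.toLp 2 ![Real.cos (a 1) * Real.cos (a 0), Real.cos (a 1) * Real.sin (a 0), Real.sin (a 1)]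

def sphDom : Set (Fin 2 → ℝ) := Set.Icc ![-π, -(π/2)] ![π, π/2]

lemma cos_mul_cos_dist (p q u v : ℝ) :
    |Real.cos p * Real.cos u - Real.cos q * Real.cos v| ≤ |p - q| + |u - v| := by
  have h1 : |Real.cos p - Real.cos q| ≤ |p - q| := myabs_cos_sub_cos_le p q
  have h2 : |Real.cos u - Real.cos v| ≤ |u - v| := myabs_cos_sub_cos_le u v
  have e : Real.cos p * Real.cos u - Real.cos q * Real.cos v
      = (Real.cos p - Real.cos q) * Real.cos u + Real.cos q * (Real.cos u - Real.cos v) := by ring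
  rw [e]
  calc _ ≤ |(Real.cos p - Real.cos q) * Real.cos u| + |Real.cos q * (Real.cos u - Real.cos v)| :=
        abs_add_le _ _
    _ ≤ |p - q| * 1 + 1 * |u - v| := by
        rw [abs_mul, abs_mul]
        gcongr <;> first
          | exact Real.abs_cos_le_one _
          | exact h1
          | exact h2
    _ = |p - q| + |u - v| := by ring

lemma cos_mul_sin_dist (p q u v : ℝ) :
    |Real.cos p * Real.sin u - Real.cos q * Real.sin v| ≤ |p - q| + |u - v| := by
  have h1 : |Real.cos p - Real.cos q| ≤ |p - q| := myabs_cos_sub_cos_le p q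
  have h2 : |Real.sin u - Real.sin v| ≤ |u - v| := myabs_sin_sub_sin_le u v
  have e : Real.cos p * Real.sin u - Real.cos q * Real.sin v
      = (Real.cos p - Real.cos q) * Real.sin u + Real.cos q * (Real.sin u - Real.sin v) := by ring
  rw [e]
  calc _ ≤ |(Real.cos p - Real.cos q) * Real.sin u| + |Real.cos q * (Real.sin u - Real.sin v)| :=
        abs_add_le _ _
    _ ≤ |p - q| * 1 + 1 * |u - v| := by
        rw [abs_mul, abs_mul]
        gcongr <;> first
          | exact Real.abs_cos_le_one _
          | exact Real.abs_sin_le_one _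
          | exact h1
          | exact h2
    _ = |p - q| + |u - v| := by ring

lemma sphParam_lipschitz : LipschitzWith 4 sphParam := by
  apply LipschitzWith.of_dist_le_mul
  intro a b
  have hd0 : dist (a 0) (b 0) ≤ dist a b := dist_le_pi_dist a b 0
  have hd1 : dist (a 1) (b 1) ≤ dist a b := dist_le_pi_dist a b 1
  have hdnn : (0:ℝ) ≤ dist a b := dist_nonneg
  rw [EuclideanSpace.dist_eq]
  have key : ∑ i, dist (sphParam a i) (sphParam b i) ^ 2 ≤ (4 * dist a b) ^ 2 := by
    rw [Fin.sum_univ_three]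
    have e0 : dist (sphParam a 0) (sphParam b 0) ≤ 2 * dist a b := by
      simp only [sphParam, PiLp.toLp_apply, Matrix.cons_val_zero, Real.dist_eq]
      calc _ ≤ |a 1 - b 1| + |a 0 - b 0| := cos_mul_cos_dist _ _ _ _
        _ ≤ dist a b + dist a b := by
            rw [Real.dist_eq] at hd0 hd1; exact add_le_add hd1 hd0
        _ = 2 * dist a b := by ring
    have e1 : dist (sphParam a 1) (sphParam b 1) ≤ 2 * dist a b := by
      simp only [sphParam, PiLp.toLp_apply, Matrix.cons_val_one, Matrix.head_cons, Real.dist_eq]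
      calc _ ≤ |a 1 - b 1| + |a 0 - b 0| := cos_mul_sin_dist _ _ _ _
        _ ≤ dist a b + dist a b := by
            rw [Real.dist_eq] at hd0 hd1; exact add_le_add hd1 hd0
        _ = 2 * dist a b := by ring
    have e2 : dist (sphParam a 2) (sphParam b 2) ≤ 2 * dist a b := by
      simp only [sphParam, PiLp.toLp_apply, Matrix.cons_val_two, Matrix.tail_cons, Matrix.head_cons, Real.dist_eq]
      calc _ ≤ |a 1 - b 1| := myabs_sin_sub_sin_le _ _
        _ ≤ dist a b := by rw [Real.dist_eq] at hd1; exact hd1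
        _ ≤ 2 * dist a b := by linarith
    have n0 := dist_nonneg (x := sphParam a 0) (y := sphParam b 0)
    have n1 := dist_nonneg (x := sphParam a 1) (y := sphParam b 1)
    have n2 := dist_nonneg (x := sphParam a 2) (y := sphParam b 2)
    nlinarith [sq_nonneg (dist a b)]
  calc Real.sqrt (∑ i, dist (sphParam a i) (sphParam b i) ^ 2)
      ≤ Real.sqrt ((4 * dist a b) ^ 2) := Real.sqrt_le_sqrt key
    _ = 4 * dist a b := Real.sqrt_sq (by linarith)
    _ = (4 : NNReal) * dist a b := by norm_num


lemma mem_sphere_iff' (x : EuclideanSpace ℝ (Fin 3)) :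
    x ∈ Metric.sphere (0 : EuclideanSpace ℝ (Fin 3)) 1 ↔
      (x 0) ^ 2 + (x 1) ^ 2 + (x 2) ^ 2 = 1 := by
  rw [mem_sphere_zero_iff_norm, EuclideanSpace.norm_eq]
  simp only [Real.norm_eq_abs, sq_abs, Fin.sum_univ_three]
  rw [show ((1:ℝ) = √1) by simp, Real.sqrt_inj (by positivity) (by norm_num)]
  simp

lemma sphere_subset_image :
    Metric.sphere (0 : EuclideanSpace ℝ (Fin 3)) 1 ⊆ sphParam '' sphDom := by
  intro x hx
  rw [mem_sphere_iff'] at hx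
  have hx2l : -1 ≤ x 2 := by nlinarith [sq_nonneg (x 0), sq_nonneg (x 1)]
  have hx2u : x 2 ≤ 1 := by nlinarith [sq_nonneg (x 0), sq_nonneg (x 1)]
  set ψ := Real.arcsin (x 2) with hψ
  have hsin : Real.sin ψ = x 2 := Real.sin_arcsin hx2l hx2u
  set r := Real.sqrt (x 0 ^ 2 + x 1 ^ 2) with hr
  have hcos : Real.cos ψ = r := by
    rw [hψ, Real.cos_arcsin, hr]
    congr 1; linarith
  have hψl : -(π/2) ≤ ψ := Real.neg_pi_div_two_le_arcsin _
  have hψu : ψ ≤ π/2 := Real.arcsin_le_pi_div_two _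
  have hrnn : 0 ≤ r := hr ▸ Real.sqrt_nonneg _
  rcases hrnn.eq_or_lt with h0 | hpos
  · have hsum : x 0 ^ 2 + x 1 ^ 2 = 0 :=
      le_antisymm (Real.sqrt_eq_zero'.mp h0.symm) (by positivity)
    have h00 : x 0 = 0 := by nlinarith [sq_nonneg (x 0), sq_nonneg (x 1)]
    have h10 : x 1 = 0 := by nlinarith [sq_nonneg (x 0), sq_nonneg (x 1)]
    have hcos0 : Real.cos ψ = 0 := by rw [hcos]; exact h0.symm
    refine ⟨![0, ψ], ?_, ?_⟩
    · refine ⟨?_, ?_⟩ <;> intro i <;> fin_cases i <;> simp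
      · exact Real.pi_nonneg
      · exact hψl
      · exact Real.pi_nonneg
      · exact hψu
    · ext i
      fin_cases i <;> simp [sphParam, hsin, hcos0, h00, h10]
  · set z : ℂ := (x 0 : ℂ) + (x 1 : ℂ) * Complex.I with hz
    have habs : ‖z‖ = r := by
      rw [hr, Complex.norm_def]
      congr 1
      simp [hz, Complex.normSq_apply]
      ring
    have hzne : z ≠ 0 := by
      intro h
      rw [h, norm_zero] at habs
      exact absurd habs.symm (ne_of_gt hpos)
    set θ := Complex.arg z with hθ
    have hcosθ : Real.cos θ = x 0 / r := by
      rw [hθ, Complex.cos_arg hzne, habs]; simp [hz]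
    have hsinθ : Real.sin θ = x 1 / r := by
      rw [hθ, Complex.sin_arg, habs]; simp [hz]
    have hrne : r ≠ 0 := ne_of_gt hpos
    refine ⟨![θ, ψ], ?_, ?_⟩
    · refine ⟨?_, ?_⟩ <;> intro i <;> fin_cases i <;> simp
      · exact (Complex.neg_pi_lt_arg z).le
      · exact hψl
      · exact Complex.arg_le_pi z
      · exact hψu
    · ext i
      fin_cases i <;> simp [sphParam, hsin, hcos, hcosθ, hsinθ] <;> field_simp


lemma sphParam_measurable : Measurable sphParam :=
  sphParam_lipschitz.continuous.measurable

lemma haus_image_le (s : Set (Fin 2 → ℝ)) :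
    μH[2] (sphParam '' s) ≤ 16 * volume s := by
  calc μH[2] (sphParam '' s) ≤ (4 : NNReal) ^ (2:ℝ) * μH[2] s :=
      sphParam_lipschitz.hausdorffMeasure_image_le (by norm_num) s
    _ = 16 * μH[2] s := by
        congr 1
        rw [show ((2:ℝ) = ((2:ℕ):ℝ)) by norm_num, ENNReal.rpow_natCast]
        norm_num
    _ = 16 * volume s := by
        congr 1
        have := MeasureTheory.hausdorffMeasure_pi_real (ι := Fin 2)
        simp only [Fintype.card_fin] at this
        rw [show ((2:ℝ) = ((2:ℕ):ℝ)) by norm_num, this]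

lemma measure_sphere_lt_top :
    μH[2] (Metric.sphere (0 : EuclideanSpace ℝ (Fin 3)) 1) < ⊤ := by
  calc μH[2] (Metric.sphere (0 : EuclideanSpace ℝ (Fin 3)) 1)
      ≤ μH[2] (sphParam '' sphDom) := measure_mono sphere_subset_image
    _ ≤ 16 * volume sphDom := haus_image_le _
    _ < ⊤ := by
        rw [sphDom, Real.volume_Icc_pi]
        refine ENNReal.mul_lt_top (by norm_num) ?_
        exact ENNReal.prod_lt_top (fun i _ => ENNReal.ofReal_lt_top)


lemma restrict_sphere_le :
    (μH[2] : Measure (EuclideanSpace ℝ (Fin 3))).restrict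
        (Metric.sphere (0 : EuclideanSpace ℝ (Fin 3)) 1) ≤
      (16 : ENNReal) • Measure.map sphParam (volume.restrict sphDom) := by
  rw [Measure.le_iff]
  intro B hB
  rw [Measure.restrict_apply hB, Measure.smul_apply, smul_eq_mul,
    Measure.map_apply sphParam_measurable hB,
    Measure.restrict_apply (sphParam_measurable hB)]
  calc μH[2] (B ∩ Metric.sphere (0 : EuclideanSpace ℝ (Fin 3)) 1)
      ≤ μH[2] (sphParam '' (sphDom ∩ sphParam ⁻¹' B)) := by
        apply measure_mono
        rw [Set.image_inter_preimage]
        exact fun y hy => ⟨sphere_subset_image hy.2, hy.1⟩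
    _ ≤ 16 * volume (sphDom ∩ sphParam ⁻¹' B) := haus_image_le _
    _ = 16 * volume (sphParam ⁻¹' B ∩ sphDom) := by rw [Set.inter_comm]


lemma integrand_continuous (k : ℕ) :
    Continuous fun x : EuclideanSpace ℝ (Fin 3) => ((x 0) ^ 2 + (x 1) ^ 2) ^ k := by
  have h0 : Continuous fun x : EuclideanSpace ℝ (Fin 3) => x 0 :=
    (EuclideanSpace.proj (0 : Fin 3)).continuous
  have h1 : Continuous fun x : EuclideanSpace ℝ (Fin 3) => x 1 :=
    (EuclideanSpace.proj (1 : Fin 3)).continuous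
  exact ((h0.pow 2).add (h1.pow 2)).pow k

lemma cos_pow_le (k : ℕ) (ψ : ℝ) (h1 : -(π/2) ≤ ψ) (h2 : ψ ≤ π/2) :
    Real.cos ψ ^ (2 * k) ≤ Real.exp (-(4 * k / π ^ 2) * ψ ^ 2) := by
  have hπ := Real.pi_pos
  have habs : |ψ| ≤ π/2 := abs_le.mpr ⟨h1, h2⟩
  have hsin : 2/π * |ψ| ≤ |Real.sin ψ| := Real.mul_abs_le_abs_sin habs
  have hsq : (2/π)^2 * ψ^2 ≤ Real.sin ψ ^ 2 := by
    have h := pow_le_pow_left₀ (by positivity) hsin 2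
    rw [mul_pow, _root_.sq_abs, _root_.sq_abs] at h
    exact h
  have hbase : Real.cos ψ ^ (2*k) = (1 - Real.sin ψ^2)^k := by
    rw [pow_mul, Real.cos_sq']
  rw [hbase]
  have hsinle : Real.sin ψ ^ 2 ≤ 1 := Real.sin_sq_le_one ψ
  have hnn : 0 ≤ 1 - Real.sin ψ^2 := by linarith
  have h1' : 1 - Real.sin ψ^2 ≤ Real.exp (-((2/π)^2 * ψ^2)) := by
    have := Real.add_one_le_exp (-((2/π)^2 * ψ^2))
    linarith
  calc (1 - Real.sin ψ^2)^k ≤ (Real.exp (-((2/π)^2 * ψ^2)))^k :=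
        pow_le_pow_left₀ hnn h1' k
    _ = Real.exp ((k : ℝ) * (-((2/π)^2 * ψ^2))) := by rw [← Real.exp_nat_mul]
    _ = Real.exp (-(4 * k / π ^ 2) * ψ ^ 2) := by
        congr 1
        field_simp
        ring

lemma sphere_measurableSet :
    MeasurableSet (Metric.sphere (0 : EuclideanSpace ℝ (Fin 3)) 1) :=
  Metric.isClosed_sphere.measurableSet

lemma integrableOn_integrand (k : ℕ) :
    IntegrableOn (fun x : EuclideanSpace ℝ (Fin 3) => ((x 0) ^ 2 + (x 1) ^ 2) ^ k)
      (Metric.sphere (0 : EuclideanSpace ℝ (Fin 3)) 1) μH[2] := by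
  haveI : IsFiniteMeasure
      ((μH[2] : Measure (EuclideanSpace ℝ (Fin 3))).restrict
        (Metric.sphere (0 : EuclideanSpace ℝ (Fin 3)) 1)) := by
    constructor
    rw [Measure.restrict_apply_univ]
    exact measure_sphere_lt_top
  apply Integrable.mono' (integrable_const (1:ℝ))
    (integrand_continuous k).aestronglyMeasurable
  rw [ae_restrict_iff' sphere_measurableSet]
  apply ae_of_all
  intro x hx
  have h : (x 0) ^ 2 + (x 1) ^ 2 + (x 2) ^ 2 = 1 := by
    rw [mem_sphere_zero_iff_norm, EuclideanSpace.norm_eq] at hx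
    simp only [Real.norm_eq_abs, _root_.sq_abs, Fin.sum_univ_three] at hx
    nlinarith [Real.sq_sqrt (show (0:ℝ) ≤ x 0 ^ 2 + x 1 ^ 2 + x 2 ^ 2 by positivity), hx]
  have h01 : (0:ℝ) ≤ (x 0) ^ 2 + (x 1) ^ 2 := by positivity
  have h1 : (x 0) ^ 2 + (x 1) ^ 2 ≤ 1 := by nlinarith [sq_nonneg (x 2)]
  rw [Real.norm_eq_abs, _root_.abs_of_nonneg (by positivity)]
  exact pow_le_one₀ h01 h1

lemma sphInt_le (k : ℕ) (hk : 1 ≤ k) :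
    sphInt k ≤ 32 * π * Real.sqrt (π ^ 3 / (4 * k)) := by
  have hπ := Real.pi_pos
  set b : ℝ := 4 * k / π ^ 2 with hb
  have hbpos : 0 < b := by
    rw [hb]
    have : (1:ℝ) ≤ (k:ℝ) := by exact_mod_cast hk
    positivity
  set f : EuclideanSpace ℝ (Fin 3) → ℝ := fun x => ((x 0) ^ 2 + (x 1) ^ 2) ^ k with hf
  set S := Metric.sphere (0 : EuclideanSpace ℝ (Fin 3)) 1 with hS
  have hfm : Measurable f := (integrand_continuous k).measurable
  -- Step 1
  have step1 : sphInt k = (∫⁻ x in S, ENNReal.ofReal (f x) ∂μH[2]).toReal := by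
    rw [sphInt]
    rw [integral_eq_lintegral_of_nonneg_ae (ae_of_all _ fun x => by positivity)
      (integrand_continuous k).aestronglyMeasurable.restrict]
  -- auxiliary functions
  set F0 : ℝ → ENNReal := Set.indicator (Set.Icc (-π) π) (1 : ℝ → ENNReal) with hF0
  set F1 : ℝ → ENNReal := fun t => ENNReal.ofReal (Real.exp (-b * t ^ 2)) with hF1
  have hF0m : Measurable F0 := measurable_const.indicator measurableSet_Icc
  have hF1m : Measurable F1 := by
    apply ENNReal.measurable_ofReal.comp
    exact (Real.continuous_exp.comp (by continuity)).measurable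
  -- Step 2 : pointwise bound on the domain
  have hpt : ∀ a ∈ sphDom, ENNReal.ofReal (f (sphParam a)) ≤ F0 (a 0) * F1 (a 1) := by
    intro a ha
    rw [sphDom, Set.mem_Icc] at ha
    have ha00 : -π ≤ a 0 := by simpa using ha.1 0
    have ha10 : -(π/2) ≤ a 1 := by simpa using ha.1 1
    have ha01 : a 0 ≤ π := by simpa using ha.2 0
    have ha11 : a 1 ≤ π/2 := by simpa using ha.2 1
    have hfval : f (sphParam a) = Real.cos (a 1) ^ (2 * k) := by
      simp only [hf, sphParam, PiLp.toLp_apply, Matrix.cons_val_zero, Matrix.cons_val_one, Matrix.head_cons]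
      rw [pow_mul]
      congr 1
      have : (Real.cos (a 1) * Real.cos (a 0)) ^ 2 + (Real.cos (a 1) * Real.sin (a 0)) ^ 2
          = Real.cos (a 1) ^ 2 * (Real.sin (a 0) ^ 2 + Real.cos (a 0) ^ 2) := by ring
      rw [this, Real.sin_sq_add_cos_sq, mul_one]
    rw [hfval, hF0, Set.indicator_of_mem (Set.mem_Icc.mpr ⟨ha00, ha01⟩), Pi.one_apply, one_mul, hF1]
    exact ENNReal.ofReal_le_ofReal (cos_pow_le k (a 1) ha10 ha11)
  -- Step 2 : the lintegral chain
  have step2 : (∫⁻ x in S, ENNReal.ofReal (f x) ∂μH[2]) ≤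
      16 * (ENNReal.ofReal (2 * π) * ENNReal.ofReal (Real.sqrt (π / b))) := by
    calc (∫⁻ x in S, ENNReal.ofReal (f x) ∂μH[2])
        ≤ ∫⁻ x, ENNReal.ofReal (f x)
            ∂((16 : ENNReal) • Measure.map sphParam (volume.restrict sphDom)) :=
          lintegral_mono' restrict_sphere_le (le_refl _)
      _ = 16 * ∫⁻ a in sphDom, ENNReal.ofReal (f (sphParam a)) ∂volume := by
          rw [lintegral_smul_measure, smul_eq_mul,
            lintegral_map hfm.ennreal_ofReal sphParam_measurable]
      _ ≤ 16 * ∫⁻ a in sphDom, F0 (a 0) * F1 (a 1) ∂volume := by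
          apply mul_le_mul_right
          apply lintegral_mono_ae
          rw [ae_restrict_iff' (show MeasurableSet sphDom by rw [sphDom]; exact measurableSet_Icc)]
          exact ae_of_all _ hpt
      _ ≤ 16 * ∫⁻ a : Fin 2 → ℝ, F0 (a 0) * F1 (a 1) ∂volume :=
          mul_le_mul_right (lintegral_mono' Measure.restrict_le_self (le_refl _)) _
      _ = 16 * ((∫⁻ t, F0 t) * (∫⁻ t, F1 t)) := by
          congr 1
          have hmeq : ∀ a : Fin 2 → ℝ,
              F0 (a 0) * F1 (a 1) =
                (fun p : ℝ × ℝ => F0 p.1 * F1 p.2) (MeasurableEquiv.finTwoArrow a) := by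
            intro a
            simp [MeasurableEquiv.finTwoArrow]
          calc (∫⁻ a : Fin 2 → ℝ, F0 (a 0) * F1 (a 1) ∂volume)
              = ∫⁻ a : Fin 2 → ℝ,
                  (fun p : ℝ × ℝ => F0 p.1 * F1 p.2) (MeasurableEquiv.finTwoArrow a) ∂volume := by
                simp_rw [hmeq]
            _ = ∫⁻ p : ℝ × ℝ, F0 p.1 * F1 p.2 ∂volume :=
                (volume_preserving_finTwoArrow ℝ).lintegral_comp
                  ((hF0m.comp measurable_fst).mul (hF1m.comp measurable_snd))
            _ = (∫⁻ t, F0 t) * (∫⁻ t, F1 t) := by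
                rw [MeasureTheory.Measure.volume_eq_prod]
                exact lintegral_prod_mul hF0m.aemeasurable hF1m.aemeasurable
      _ = 16 * (ENNReal.ofReal (2 * π) * ENNReal.ofReal (Real.sqrt (π / b))) := by
          congr 2
          · rw [hF0, lintegral_indicator_one measurableSet_Icc, Real.volume_Icc]
            congr 1
            ring
          · rw [hF1,
              ← ofReal_integral_eq_lintegral_ofReal (integrable_exp_neg_mul_sq hbpos)
                (ae_of_all _ fun x => (Real.exp_pos _).le),
              integral_gaussian]
  -- Step 3
  rw [step1]
  calc (∫⁻ x in S, ENNReal.ofReal (f x) ∂μH[2]).toReal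
      ≤ (16 * (ENNReal.ofReal (2 * π) * ENNReal.ofReal (Real.sqrt (π / b)))).toReal := by
        apply ENNReal.toReal_mono _ step2
        exact (ENNReal.mul_lt_top (by norm_num)
          (ENNReal.mul_lt_top ENNReal.ofReal_lt_top ENNReal.ofReal_lt_top)).ne
    _ = 16 * (2 * π * Real.sqrt (π / b)) := by
        rw [ENNReal.toReal_mul, ENNReal.toReal_mul, ENNReal.toReal_ofReal (by positivity),
          ENNReal.toReal_ofReal (Real.sqrt_nonneg _)]
        norm_num
    _ = 32 * π * Real.sqrt (π ^ 3 / (4 * k)) := by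
        rw [show π / b = π ^ 3 / (4 * k) by rw [hb]; field_simp]
        ring


def projPlane (x : EuclideanSpace ℝ (Fin 3)) : Fin 2 → ℝ := ![x 0, x 1]

lemma projPlane_lipschitz : LipschitzWith 1 projPlane := by
  apply LipschitzWith.of_dist_le_mul
  intro x y
  rw [NNReal.coe_one, one_mul]
  rw [dist_pi_le_iff dist_nonneg]
  intro i
  have key : ∀ j : Fin 3, dist (x j) (y j) ≤ dist x y := by
    intro j
    rw [EuclideanSpace.dist_eq]
    have h1 : dist (x j) (y j) ^ 2 ≤ ∑ i, dist (x i) (y i) ^ 2 :=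
      Finset.single_le_sum (f := fun i => dist (x i) (y i) ^ 2)
        (fun i _ => sq_nonneg _) (Finset.mem_univ j)
    calc dist (x j) (y j) = Real.sqrt (dist (x j) (y j) ^ 2) :=
          (Real.sqrt_sq dist_nonneg).symm
      _ ≤ _ := Real.sqrt_le_sqrt h1
  fin_cases i
  · simpa [projPlane] using key 0
  · simpa [projPlane] using key 1

def capSet : Set (EuclideanSpace ℝ (Fin 3)) :=
  Metric.sphere (0 : EuclideanSpace ℝ (Fin 3)) 1 ∩
    {x | 3/4 ≤ (x 0) ^ 2 + (x 1) ^ 2}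

lemma capSet_measurable : MeasurableSet capSet := by
  apply MeasurableSet.inter Metric.isClosed_sphere.measurableSet
  have h : Continuous fun x : EuclideanSpace ℝ (Fin 3) => (x 0) ^ 2 + (x 1) ^ 2 := by
    have h0 : Continuous fun x : EuclideanSpace ℝ (Fin 3) => x 0 :=
      (EuclideanSpace.proj (0 : Fin 3)).continuous
    have h1 : Continuous fun x : EuclideanSpace ℝ (Fin 3) => x 1 :=
      (EuclideanSpace.proj (1 : Fin 3)).continuous
    exact (h0.pow 2).add (h1.pow 2)
  exact (isClosed_le continuous_const h).measurableSet

lemma box_subset : Set.Icc ![(9:ℝ)/10, 0] ![(19:ℝ)/20, 1/10] ⊆ projPlane '' capSet := by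
  intro u hu
  rw [Set.mem_Icc] at hu
  have h00 : (9:ℝ)/10 ≤ u 0 := by simpa using hu.1 0
  have h10 : (0:ℝ) ≤ u 1 := by simpa using hu.1 1
  have h01 : u 0 ≤ 19/20 := by simpa using hu.2 0
  have h11 : u 1 ≤ 1/10 := by simpa using hu.2 1
  have hs1 : u 0 ^ 2 + u 1 ^ 2 ≤ 1 := by nlinarith
  have hs2 : (3:ℝ)/4 ≤ u 0 ^ 2 + u 1 ^ 2 := by nlinarith
  set x : EuclideanSpace ℝ (Fin 3) :=
    WithLp.toLp 2 ![u 0, u 1, Real.sqrt (1 - (u 0 ^ 2 + u 1 ^ 2))] with hx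
  refine ⟨x, ⟨?_, ?_⟩, ?_⟩
  · rw [mem_sphere_iff']
    have : (x 0) = u 0 ∧ (x 1) = u 1 ∧ (x 2) = Real.sqrt (1 - (u 0 ^ 2 + u 1 ^ 2)) := by
      refine ⟨rfl, rfl, rfl⟩
    rw [this.1, this.2.1, this.2.2, Real.sq_sqrt (by linarith)]
    ring
  · show (3:ℝ)/4 ≤ (x 0) ^ 2 + (x 1) ^ 2
    have : (x 0) = u 0 ∧ (x 1) = u 1 := ⟨rfl, rfl⟩
    rw [this.1, this.2]
    exact hs2
  · funext i
    fin_cases i <;> simp [projPlane, hx]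

lemma capSet_pos : 0 < μH[2] capSet := by
  have himg : μH[2] (projPlane '' capSet) ≤ 1 * μH[2] capSet := by
    have := projPlane_lipschitz.hausdorffMeasure_image_le (show (0:ℝ) ≤ 2 by norm_num) capSet
    simpa using this
  rw [one_mul] at himg
  have hbox : (0:ENNReal) < volume (Set.Icc ![(9:ℝ)/10, 0] ![(19:ℝ)/20, 1/10]) := by
    rw [Real.volume_Icc_pi]
    rw [Fin.prod_univ_two]
    simp only [Matrix.cons_val_zero, Matrix.cons_val_one, Matrix.head_cons]
    rw [show (19:ℝ)/20 - 9/10 = 1/20 by norm_num, show (1:ℝ)/10 - 0 = 1/10 by norm_num]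
    exact ENNReal.mul_pos (by simp) (by simp)
  have hμpi : (volume : Measure (Fin 2 → ℝ)) = μH[2] := by
    have := MeasureTheory.hausdorffMeasure_pi_real (ι := Fin 2)
    simp only [Fintype.card_fin] at this
    rw [show ((2:ℝ) = ((2:ℕ):ℝ)) by norm_num, this]
  calc (0:ENNReal) < volume (Set.Icc ![(9:ℝ)/10, 0] ![(19:ℝ)/20, 1/10]) := hbox
    _ = μH[2] (Set.Icc ![(9:ℝ)/10, 0] ![(19:ℝ)/20, 1/10]) := by rw [hμpi]
    _ ≤ μH[2] (projPlane '' capSet) := measure_mono box_subset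
    _ ≤ μH[2] capSet := himg

lemma sphInt_pos (k : ℕ) : 0 < sphInt k := by
  have hfin : μH[2] capSet < ⊤ :=
    lt_of_le_of_lt (measure_mono Set.inter_subset_left) measure_sphere_lt_top
  have hint : IntegrableOn (fun x : EuclideanSpace ℝ (Fin 3) => ((x 0) ^ 2 + (x 1) ^ 2) ^ k)
      capSet μH[2] :=
    (integrableOn_integrand k).mono_set Set.inter_subset_left
  have h1 : (μH[2] capSet).toReal * (3/4 : ℝ) ^ k ≤
      ∫ x in capSet, ((x 0) ^ 2 + (x 1) ^ 2) ^ k ∂μH[2] := by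
    have := setIntegral_mono_on (integrableOn_const hfin.ne) hint capSet_measurable
      (fun x hx => pow_le_pow_left₀ (by norm_num) hx.2 k)
    calc (μH[2] capSet).toReal * (3/4 : ℝ) ^ k
        = ∫ _ in capSet, (3/4 : ℝ) ^ k ∂μH[2] := by rw [setIntegral_const, measureReal_def, smul_eq_mul]
      _ ≤ _ := this
  have h2 : (∫ x in capSet, ((x 0) ^ 2 + (x 1) ^ 2) ^ k ∂μH[2]) ≤ sphInt k := by
    rw [sphInt]
    apply setIntegral_mono_set (integrableOn_integrand k)
    · apply ae_of_all; intro x; positivity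
    · exact Set.inter_subset_left.eventuallyLE
  have h3 : 0 < (μH[2] capSet).toReal * (3/4 : ℝ) ^ k := by
    apply mul_pos
    · exact ENNReal.toReal_pos capSet_pos.ne' hfin.ne
    · positivity
  linarith


noncomputable def normC : ℝ := (32 * π * Real.sqrt (π ^ 3 / 4)) ^ (-(1 / 2 : ℝ))

lemma normC_pos : 0 < normC := by
  rw [normC]
  have hπ := Real.pi_pos
  apply Real.rpow_pos_of_pos
  positivity

lemma normConst_ge (k : ℕ) (hk : 1 ≤ k) :
    normC * (k : ℝ) ^ (1/4 : ℝ) ≤ sphericalNormConst k := by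
  have hπ := Real.pi_pos
  have hkpos : (0:ℝ) < k := by exact_mod_cast hk
  have hC0 : (0:ℝ) < 32 * π * Real.sqrt (π ^ 3 / 4) := by positivity
  have heq : Real.sqrt (π ^ 3 / (4 * k)) = Real.sqrt (π ^ 3 / 4) * (k : ℝ) ^ (-(1/2 : ℝ)) := by
    rw [show π ^ 3 / (4 * (k:ℝ)) = (π ^ 3 / 4) / k by ring,
      Real.sqrt_div (by positivity) (k : ℝ), Real.rpow_neg hkpos.le,
      ← Real.sqrt_eq_rpow, div_eq_mul_inv]
  have hU : sphInt k ≤ (32 * π * Real.sqrt (π ^ 3 / 4)) * (k : ℝ) ^ (-(1/2 : ℝ)) := by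
    calc sphInt k ≤ 32 * π * Real.sqrt (π ^ 3 / (4 * k)) := sphInt_le k hk
      _ = _ := by rw [heq]; ring
  have hmain := Real.rpow_le_rpow_of_nonpos (sphInt_pos k) hU
    (by norm_num : (-(1/2 : ℝ)) ≤ 0)
  have hrw : ((32 * π * Real.sqrt (π ^ 3 / 4)) * (k : ℝ) ^ (-(1/2 : ℝ))) ^ (-(1/2 : ℝ))
      = normC * (k : ℝ) ^ (1/4 : ℝ) := by
    rw [Real.mul_rpow hC0.le (Real.rpow_nonneg hkpos.le _), ← Real.rpow_mul hkpos.le, normC]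
    norm_num
  rw [hrw] at hmain
  exact hmain

lemma part1_eq (p : ℝ) (hp : 1 ≤ p) (k m : ℕ) :
    (∫ s in Set.Icc (0 : ℝ) (2 * π),
        ‖highestWeightSH k (equator s) * highestWeightSH m (equator s)‖ ^ p) ^ (1 / p) =
      (2 * π) ^ (1 / p) * sphericalNormConst k * sphericalNormConst m := by
  have hp0 : p ≠ 0 := by linarith
  set Nk := sphericalNormConst k with hNk
  set Nm := sphericalNormConst m with hNm
  have hk0 : 0 ≤ Nk := normConst_nonneg k
  have hm0 : 0 ≤ Nm := normConst_nonneg m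
  have hcongr : (∫ s in Set.Icc (0 : ℝ) (2 * π),
      ‖highestWeightSH k (equator s) * highestWeightSH m (equator s)‖ ^ p)
      = ∫ _ in Set.Icc (0 : ℝ) (2 * π), (Nk * Nm) ^ p := by
    apply setIntegral_congr_fun measurableSet_Icc
    intro s _
    beta_reduce
    rw [norm_mul, norm_hw, norm_hw]
  rw [hcongr]
  have h2pi : (0:ℝ) ≤ 2 * π - 0 := by have := Real.pi_pos; linarith
  rw [setIntegral_const, measureReal_def, Real.volume_Icc, smul_eq_mul, ENNReal.toReal_ofReal h2pi,
    sub_zero, Real.mul_rpow (by positivity) (Real.rpow_nonneg (by positivity) _),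
    ← Real.rpow_mul (by positivity), mul_one_div_cancel hp0, Real.rpow_one, mul_assoc]

/-- On the equator, the `L^p` norm of the product `Q_k Q_m` equals `(2π)^{1/p} N_k N_m`,
and hence is bounded below by `c k^{1/4} m^{1/4}`. -/
theorem stmt_9 :
    (∀ p : ℝ, 1 ≤ p → ∀ k m : ℕ, 1 ≤ k → 1 ≤ m →
      (∫ s in Set.Icc (0 : ℝ) (2 * π),
          ‖highestWeightSH k (equator s) * highestWeightSH m (equator s)‖ ^ p) ^ (1 / p) =
        (2 * π) ^ (1 / p) * sphericalNormConst k * sphericalNormConst m) ∧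
    ∃ c : ℝ, 0 < c ∧ ∀ p : ℝ, 1 ≤ p → ∀ k m : ℕ, 1 ≤ k → 1 ≤ m →
      c * (k : ℝ) ^ (1 / 4 : ℝ) * (m : ℝ) ^ (1 / 4 : ℝ) ≤
        (∫ s in Set.Icc (0 : ℝ) (2 * π),
            ‖highestWeightSH k (equator s) * highestWeightSH m (equator s)‖ ^ p) ^ (1 / p) := by
  constructor
  · intro p hp k m _ _
    exact part1_eq p hp k m
  · refine ⟨normC * normC, mul_pos normC_pos normC_pos, ?_⟩
    intro p hp k m hk hm
    rw [part1_eq p hp k m]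
    have hπ := Real.pi_pos
    have h2pi : (1:ℝ) ≤ (2 * π) ^ (1 / p) := by
      apply Real.one_le_rpow (by nlinarith [Real.pi_gt_three])
      positivity
    have hk4 : (0:ℝ) ≤ (k : ℝ) ^ (1 / 4 : ℝ) := Real.rpow_nonneg (by positivity) _
    have hm4 : (0:ℝ) ≤ (m : ℝ) ^ (1 / 4 : ℝ) := Real.rpow_nonneg (by positivity) _
    have hkge := normConst_ge k hk
    have hmge := normConst_ge m hm
    have hNk := normConst_nonneg k
    have hNm := normConst_nonneg m
    calc normC * normC * (k : ℝ) ^ (1 / 4 : ℝ) * (m : ℝ) ^ (1 / 4 : ℝ)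
        = (normC * (k : ℝ) ^ (1 / 4 : ℝ)) * (normC * (m : ℝ) ^ (1 / 4 : ℝ)) := by ring
      _ ≤ sphericalNormConst k * sphericalNormConst m :=
          mul_le_mul hkge hmge (mul_nonneg normC_pos.le hm4) hNk
      _ ≤ (2 * π) ^ (1 / p) * sphericalNormConst k * sphericalNormConst m := by
          nlinarith [mul_nonneg hNk hNm]
end
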